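/- The function cov, assigning to each bounded Borel subset C of each ℝ^d the smallest number cov(C) of open balls of radius 1 (with centers anywhere in ℝ^d) needed to cover C, is a packing bound function; that is, it satisfies the sphere bound, Lipschitz, union, and mesh axioms. -/

import Mathlib

open scoped Pointwise
open MeasureTheory Bornology Filter

/-- A packing bound function: an assignment of a nonnegative real number to every bounded
Borel subset of every Euclidean space, satisfying the sphere bound, Lipschitz, union,
and mesh axioms. -/
structure PackingBoundFunction where
  toFun : ∀ d : ℕ, Set (EuclideanSpace ℝ (Fin d)) → ℝ
  nonneg : ∀ (d : ℕ) (C : Set (EuclideanSpace ℝ (Fin d))),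
    IsBounded C → MeasurableSet C → 0 ≤ toFun d C
  sphere_bound : ∀ (d : ℕ) (C : Set (EuclideanSpace ℝ (Fin d))),
    IsBounded C → MeasurableSet C → C.Nonempty →
    (∃ z, C ⊆ Metric.ball z 1) → toFun d C = 1
  lipschitz : ∀ (d d' : ℕ) (C : Set (EuclideanSpace ℝ (Fin d)))
    (C' : Set (EuclideanSpace ℝ (Fin d'))),
    IsBounded C → MeasurableSet C → IsBounded C' → MeasurableSet C' →
    (∃ ψ : EuclideanSpace ℝ (Fin d) → EuclideanSpace ℝ (Fin d'),
      (∀ x ∈ C, ψ x ∈ C') ∧ ∀ x ∈ C, ∀ y ∈ C, dist x y ≤ dist (ψ x) (ψ y)) →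
    toFun d C ≤ toFun d' C'
  union : ∀ (d : ℕ) (C C' : Set (EuclideanSpace ℝ (Fin d))),
    IsBounded C → MeasurableSet C → IsBounded C' → MeasurableSet C' →
    (∀ x ∈ C, ∀ x' ∈ C', 2 ≤ dist x x') →
    toFun d (C ∪ C') = toFun d C + toFun d C'
  mesh : ∀ (ε : ℝ), 0 < ε → ∀ (d : ℕ) (C C' : Set (EuclideanSpace ℝ (Fin d))),
    IsBounded C → MeasurableSet C → IsBounded C' → MeasurableSet C' →
    C ⊆ Metric.thickening ε C' →
    toFun d ((1 / (1 + ε)) • C) ≤ toFun d C'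

/-- `cov C` is the smallest number of open unit balls (centered anywhere) needed to cover `C`. -/
noncomputable def cov (d : ℕ) (C : Set (EuclideanSpace ℝ (Fin d))) : ℕ :=
  sInf {m : ℕ | ∃ X : Finset (EuclideanSpace ℝ (Fin d)),
    X.card = m ∧ C ⊆ ⋃ x ∈ X, Metric.ball x 1}

open Metric Finset Classical
noncomputable section
attribute [local instance] Classical.propDecidable

abbrev Euc (d : ℕ) := EuclideanSpace ℝ (Fin d)


lemma cov_le {d : ℕ} {C : Set (Euc d)} (X : Finset (Euc d))
    (h : C ⊆ ⋃ x ∈ X, Metric.ball x 1) : cov d C ≤ X.card :=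
  Nat.sInf_le ⟨X, rfl, h⟩

lemma covSet_nonempty {d : ℕ} {C : Set (Euc d)} (hb : IsBounded C) :
    {m : ℕ | ∃ X : Finset (Euc d), X.card = m ∧ C ⊆ ⋃ x ∈ X, Metric.ball x 1}.Nonempty := by
  have htb : TotallyBounded C := hb.isCompact_closure.totallyBounded.subset subset_closure
  obtain ⟨t, htf, hts⟩ := (Metric.totallyBounded_iff.mp htb) 1 one_pos
  exact ⟨htf.toFinset.card, htf.toFinset, rfl, by simpa [htf.mem_toFinset] using hts⟩

lemma cov_spec {d : ℕ} {C : Set (Euc d)} (hb : IsBounded C) :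
    ∃ X : Finset (Euc d), X.card = cov d C ∧ C ⊆ ⋃ x ∈ X, Metric.ball x 1 :=
  Nat.sInf_mem (covSet_nonempty hb)

lemma cov_sphere {d : ℕ} {C : Set (Euc d)} (hne : C.Nonempty)
    (h : ∃ z, C ⊆ Metric.ball z 1) : cov d C = 1 := by
  obtain ⟨z, hz⟩ := h
  have hle : cov d C ≤ 1 := by
    have := cov_le (C := C) {z} (by simpa using hz)
    simpa using this
  have hb : IsBounded C := (isBounded_ball).subset hz
  have hne0 : cov d C ≠ 0 := by
    intro h0
    obtain ⟨X, hcard, hcov⟩ := cov_spec hb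
    rw [h0, Finset.card_eq_zero] at hcard
    subst hcard
    obtain ⟨c, hc⟩ := hne
    simpa using hcov hc
  omega

lemma cov_union {d : ℕ} {C C' : Set (Euc d)} (hb : IsBounded C) (hb' : IsBounded C')
    (hsep : ∀ x ∈ C, ∀ x' ∈ C', 2 ≤ dist x x') :
    cov d (C ∪ C') = cov d C + cov d C' := by
  obtain ⟨X, hXc, hX⟩ := cov_spec hb
  obtain ⟨X', hXc', hX'⟩ := cov_spec hb'
  obtain ⟨Y, hYc, hY⟩ := cov_spec (hb.union hb')
  apply le_antisymm
  · calc cov d (C ∪ C') ≤ (X ∪ X').card := by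
          refine cov_le _ ?_
          rintro p (hp | hp)
          · obtain ⟨s, hs⟩ := Set.mem_iUnion.mp (hX hp)
            simp only [Set.mem_iUnion, exists_prop] at hs ⊢
            exact ⟨s, Finset.mem_union_left _ hs.1, hs.2⟩
          · obtain ⟨s, hs⟩ := Set.mem_iUnion.mp (hX' hp)
            simp only [Set.mem_iUnion, exists_prop] at hs ⊢
            exact ⟨s, Finset.mem_union_right _ hs.1, hs.2⟩
        _ ≤ X.card + X'.card := Finset.card_union_le _ _
        _ = cov d C + cov d C' := by rw [hXc, hXc']
  · set YC := Y.filter (fun x => (Metric.ball x 1 ∩ C).Nonempty) with hYC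
    set YC' := Y.filter (fun x => (Metric.ball x 1 ∩ C').Nonempty) with hYC'
    have hdisj : Disjoint YC YC' := by
      rw [Finset.disjoint_left]
      intro x hx hx'
      obtain ⟨p, hp1, hp2⟩ := (Finset.mem_filter.mp hx).2
      obtain ⟨q, hq1, hq2⟩ := (Finset.mem_filter.mp hx').2
      have : dist p q < 2 := by
        calc dist p q ≤ dist p x + dist x q := dist_triangle _ _ _
          _ < 1 + 1 := by
              rw [Metric.mem_ball] at hp1 hq1
              rw [dist_comm x q] at *
              linarith
          _ = 2 := by norm_num
      exact absurd (hsep p hp2 q hq2) (by linarith)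
    have hCcov : C ⊆ ⋃ x ∈ YC, Metric.ball x 1 := by
      intro p hp
      obtain ⟨s, hs⟩ := Set.mem_iUnion.mp (hY (Set.mem_union_left _ hp))
      simp only [Set.mem_iUnion, exists_prop] at hs ⊢
      exact ⟨s, Finset.mem_filter.mpr ⟨hs.1, ⟨p, hs.2, hp⟩⟩, hs.2⟩
    have hCcov' : C' ⊆ ⋃ x ∈ YC', Metric.ball x 1 := by
      intro p hp
      obtain ⟨s, hs⟩ := Set.mem_iUnion.mp (hY (Set.mem_union_right _ hp))
      simp only [Set.mem_iUnion, exists_prop] at hs ⊢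
      exact ⟨s, Finset.mem_filter.mpr ⟨hs.1, ⟨p, hs.2, hp⟩⟩, hs.2⟩
    calc cov d C + cov d C' ≤ YC.card + YC'.card :=
          Nat.add_le_add (cov_le _ hCcov) (cov_le _ hCcov')
      _ = (YC ∪ YC').card := (Finset.card_union_of_disjoint hdisj).symm
      _ ≤ Y.card := Finset.card_le_card (Finset.union_subset
            (Finset.filter_subset _ _) (Finset.filter_subset _ _))
      _ = cov d (C ∪ C') := hYc

lemma cov_mesh {d : ℕ} (ε : ℝ) (hε : 0 < ε) {C C' : Set (Euc d)}
    (hb' : IsBounded C') (hsub : C ⊆ Metric.thickening ε C') :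
    cov d ((1 / (1 + ε)) • C) ≤ cov d C' := by
  obtain ⟨X, hXc, hX⟩ := cov_spec hb'
  have h1ε : (0:ℝ) < 1 + ε := by linarith
  refine le_trans (cov_le (X.image (fun x => (1 / (1 + ε)) • x)) ?_)
    (le_of_le_of_eq (Finset.card_image_le) hXc)
  rintro _ ⟨p, hp, rfl⟩
  obtain ⟨c', hc', hd⟩ := Metric.mem_thickening_iff.mp (hsub hp)
  obtain ⟨x, hx⟩ := Set.mem_iUnion.mp (hX hc')
  simp only [Set.mem_iUnion, exists_prop] at hx
  refine Set.mem_iUnion.mpr ⟨(1 / (1 + ε)) • x, Set.mem_iUnion.mpr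
    ⟨Finset.mem_image_of_mem _ hx.1, ?_⟩⟩
  have hdx : dist p x < 1 + ε := by
    calc dist p x ≤ dist p c' + dist c' x := dist_triangle _ _ _
      _ < ε + 1 := add_lt_add hd (Metric.mem_ball.mp hx.2)
      _ = 1 + ε := by ring
  rw [Metric.mem_ball, dist_smul₀]
  calc |(1:ℝ) / (1 + ε)| * dist p x = (1 / (1 + ε)) * dist p x := by
        rw [abs_of_pos (by positivity)]
    _ < (1 / (1 + ε)) * (1 + ε) := by
        apply mul_lt_mul_of_pos_left hdx (by positivity)
    _ = 1 := by field_simp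


local notation "⟪" x ", " y "⟫" => @inner ℝ _ _ x y

lemma sum_sq_identity {H : Type*} [NormedAddCommGroup H] [InnerProductSpace ℝ H]
    {ι : Type*} (J : Finset ι) (c : ι → ℝ) (P : ι → H) :
    ∑ p ∈ J, ∑ q ∈ J, c p * c q * ‖P p - P q‖^2
    = 2 * (∑ q ∈ J, c q) * (∑ p ∈ J, c p * ‖P p‖^2) - 2 * ‖∑ p ∈ J, c p • P p‖^2 := by
  have hinner : ‖∑ p ∈ J, c p • P p‖^2 = ∑ p ∈ J, ∑ q ∈ J, c p * c q * ⟪P p, P q⟫ := by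
    rw [← real_inner_self_eq_norm_sq, sum_inner]
    refine Finset.sum_congr rfl fun p _ => ?_
    rw [inner_sum]
    refine Finset.sum_congr rfl fun q _ => ?_
    rw [real_inner_smul_left, real_inner_smul_right]; ring
  have hexp : ∀ p q : ι, c p * c q * ‖P p - P q‖^2
      = c p * c q * ‖P p‖^2 + c p * c q * ‖P q‖^2 - 2 * (c p * c q * ⟪P p, P q⟫) := by
    intro p q; rw [norm_sub_sq_real]; ring
  simp_rw [hexp]
  rw [hinner]
  simp only [Finset.sum_sub_distrib, Finset.sum_add_distrib, ← Finset.mul_sum]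
  have h1 : ∑ p ∈ J, ∑ q ∈ J, c p * c q * ‖P p‖^2
      = (∑ q ∈ J, c q) * (∑ p ∈ J, c p * ‖P p‖^2) := by
    rw [Finset.sum_comm, Finset.sum_mul_sum]
    exact Finset.sum_congr rfl fun q _ => Finset.sum_congr rfl fun p _ => by ring
  have h2 : ∑ p ∈ J, ∑ q ∈ J, c p * c q * ‖P q‖^2
      = (∑ q ∈ J, c q) * (∑ p ∈ J, c p * ‖P p‖^2) := by
    rw [Finset.sum_mul_sum]
    exact Finset.sum_congr rfl fun q _ => Finset.sum_congr rfl fun p _ => by ring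
  rw [h1, h2]
  ring

lemma kirszbraun_finset {d d' : ℕ} (T : Finset (Euc d)) (φ : Euc d → Euc d') (y : Euc d')
    (hexp : ∀ a ∈ T, ∀ b ∈ T, dist a b ≤ dist (φ a) (φ b)) :
    ∃ w : Euc d, ∀ a ∈ T, dist w a ≤ dist (φ a) y := by
  rcases T.eq_empty_or_nonempty with rfl | hT
  · exact ⟨0, by simp⟩
  set r : Euc d → ℝ := fun a => dist (φ a) y with hr_def
  by_cases hzero : ∃ a₀ ∈ T, r a₀ = 0
  · obtain ⟨a₀, ha₀, hr0⟩ := hzero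
    refine ⟨a₀, fun a ha => ?_⟩
    calc dist a₀ a = dist a a₀ := dist_comm _ _
      _ ≤ dist (φ a) (φ a₀) := hexp a ha a₀ ha₀
      _ ≤ dist (φ a) y + dist y (φ a₀) := dist_triangle _ _ _
      _ = r a := by
          simp only [hr_def] at hr0 ⊢
          rw [dist_comm y, hr0, add_zero]
  push_neg at hzero
  have hrpos : ∀ a ∈ T, 0 < r a := fun a ha =>
    lt_of_le_of_ne dist_nonneg (Ne.symm (hzero a ha))
  set f : Euc d → ℝ := fun w => T.sup' hT (fun a => dist w a / r a) with hf_def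
  have hf_cont : Continuous f := by
    rw [hf_def]
    exact Continuous.finset_sup'_apply (f := fun (i : Euc d) (w : Euc d) => dist w i / r i) hT
      (fun i _ => (continuous_id.dist continuous_const).div_const _)
  have hf_ge : ∀ w a, a ∈ T → dist w a / r a ≤ f w := fun w a ha =>
    Finset.le_sup' (fun a => dist w a / r a) ha
  obtain ⟨a₀, ha₀⟩ := id hT
  set R : ℝ := f a₀ * r a₀ + 1 with hR_def
  have hfa₀ : 0 ≤ f a₀ := le_trans (by positivity) (hf_ge a₀ a₀ ha₀)
  have hout : ∀ w, w ∉ Metric.closedBall a₀ R → f a₀ < f w := by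
    intro w hw
    rw [Metric.mem_closedBall, not_le] at hw
    have h1 : f a₀ < dist w a₀ / r a₀ := by
      rw [lt_div_iff₀ (hrpos a₀ ha₀)]
      rw [hR_def] at hw
      linarith
    exact lt_of_lt_of_le h1 (hf_ge w a₀ ha₀)
  obtain ⟨w₀, hw₀K, hmin⟩ := (isCompact_closedBall a₀ R).exists_isMinOn
    ⟨a₀, Metric.mem_closedBall_self (by positivity)⟩ hf_cont.continuousOn
  set μ := f w₀ with hμ_def
  have hμ_global : ∀ w, μ ≤ f w := by
    intro w
    by_cases hw : w ∈ Metric.closedBall a₀ R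
    · exact hmin hw
    · exact le_trans (hmin (Metric.mem_closedBall_self (by positivity))) (hout w hw).le
  by_cases hμ1 : μ ≤ 1
  · refine ⟨w₀, fun a ha => ?_⟩
    have := le_trans (hf_ge w₀ a ha) hμ1
    exact (div_le_one (hrpos a ha)).mp this
  push_neg at hμ1
  exfalso
  have hμpos : 0 < μ := lt_trans one_pos hμ1
  set J := T.filter (fun a => dist w₀ a = μ * r a) with hJ_def
  have hJsub : J ⊆ T := Finset.filter_subset _ _
  have hJne : J.Nonempty := by
    obtain ⟨a, ha, hsup⟩ := Finset.exists_mem_eq_sup' hT (fun a => dist w₀ a / r a)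
    refine ⟨a, Finset.mem_filter.mpr ⟨ha, ?_⟩⟩
    have hμa : μ = dist w₀ a / r a := hsup
    rw [hμa, div_mul_cancel₀ _ (hrpos a ha).ne']
  have hJle : ∀ a ∈ T, dist w₀ a ≤ μ * r a := by
    intro a ha
    have := hf_ge w₀ a ha
    rw [div_le_iff₀ (hrpos a ha)] at this
    linarith [this]
  -- w₀ lies in the convex hull of the active points
  have hw₀H : w₀ ∈ convexHull ℝ (↑J : Set (Euc d)) := by
    by_contra hnot
    set H := convexHull ℝ (↑J : Set (Euc d)) with hH_def
    have hHconv : Convex ℝ H := convex_convexHull _ _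
    have hHcompact : IsCompact H := J.finite_toSet.isCompact_convexHull (𝕜 := ℝ)
    have hHne : H.Nonempty := by
      obtain ⟨j, hj⟩ := hJne
      exact ⟨j, subset_convexHull ℝ _ (Finset.mem_coe.mpr hj)⟩
    obtain ⟨p₀, hp₀H, hproj⟩ := exists_norm_eq_iInf_of_complete_convex hHne
      hHcompact.isComplete hHconv w₀
    have hips : ∀ p ∈ H, ⟪w₀ - p₀, p - p₀⟫ ≤ 0 :=
      (norm_eq_iInf_iff_real_inner_le_zero hHconv hp₀H).mp hproj
    set u := w₀ - p₀ with hu_def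
    have hu0 : u ≠ 0 := sub_ne_zero.mpr (fun h => hnot (h ▸ hp₀H))
    have hunorm : (0:ℝ) < ‖u‖ := norm_pos_iff.mpr hu0
    have hupos : ∀ p ∈ J, ‖u‖^2 ≤ ⟪u, w₀ - p⟫ := by
      intro p hp
      have h1 := hips p (subset_convexHull ℝ _ (Finset.mem_coe.mpr hp))
      have h2 : ⟪u, w₀ - p⟫ = ⟪u, u⟫ - ⟪u, p - p₀⟫ := by
        rw [← inner_sub_right]
        congr 1
        rw [hu_def]
        abel
      rw [h2, real_inner_self_eq_norm_sq]
      linarith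
    -- choose the step size
    set g : Euc d → ℝ := fun a =>
      if dist w₀ a = μ * r a then ⟪u, w₀ - a⟫ / ‖u‖^2
      else (μ * r a - dist w₀ a) / ‖u‖ with hg_def
    have hgpos : ∀ a ∈ T, 0 < g a := by
      intro a ha
      by_cases hact : dist w₀ a = μ * r a
      · simp only [hg_def, if_pos hact]
        have := hupos a (Finset.mem_filter.mpr ⟨ha, hact⟩)
        have h0 : (0:ℝ) < ‖u‖^2 := by positivity
        exact div_pos (lt_of_lt_of_le h0 this) h0
      · simp only [hg_def, if_neg hact]
        have hlt : dist w₀ a < μ * r a := lt_of_le_of_ne (hJle a ha) hact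
        have : 0 < μ * r a - dist w₀ a := by linarith
        positivity
    set t : ℝ := (T.inf' hT g) / 2 with ht_def
    have htpos : 0 < t := by
      rw [ht_def]
      obtain ⟨a, ha, hinf⟩ := Finset.exists_mem_eq_inf' hT g
      rw [hinf]
      linarith [hgpos a ha]
    have htlt : ∀ a ∈ T, t < g a := by
      intro a ha
      have h1 : T.inf' hT g ≤ g a := Finset.inf'_le g ha
      have h2 : 0 < T.inf' hT g := by
        obtain ⟨b, hb, hinf⟩ := Finset.exists_mem_eq_inf' hT g
        rw [hinf]; exact hgpos b hb
      rw [ht_def]; linarith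
    set w₁ := w₀ - t • u with hw₁_def
    have hstrict : ∀ a ∈ T, dist w₁ a < μ * r a := by
      intro a ha
      by_cases hact : dist w₀ a = μ * r a
      · have hinner_pos : ‖u‖^2 ≤ ⟪u, w₀ - a⟫ :=
          hupos a (Finset.mem_filter.mpr ⟨ha, hact⟩)
        have hexpand : ‖w₁ - a‖^2 = ‖w₀ - a‖^2 - 2*t*⟪u, w₀ - a⟫ + t^2*‖u‖^2 := by
          have heq : w₁ - a = (w₀ - a) - t • u := by rw [hw₁_def]; abel
          rw [heq, norm_sub_sq_real, real_inner_smul_right, norm_smul, mul_pow]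
          rw [real_inner_comm]
          simp [abs_of_pos htpos]
          ring
        have htg : t < ⟪u, w₀ - a⟫ / ‖u‖^2 := by
          have := htlt a ha
          simpa only [hg_def, if_pos hact] using this
        have ht2 : t^2 * ‖u‖^2 < t * ⟪u, w₀ - a⟫ := by
          rw [lt_div_iff₀ (by positivity)] at htg
          nlinarith
        have hlt2 : ‖w₁ - a‖^2 < ‖w₀ - a‖^2 := by
          have hpos2 : 0 < t * ⟪u, w₀ - a⟫ := by
            have : 0 < ⟪u, w₀ - a⟫ := lt_of_lt_of_le (by positivity) hinner_pos
            positivity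
          linarith
        have : ‖w₁ - a‖ < ‖w₀ - a‖ := by
          apply lt_of_pow_lt_pow_left₀ 2 (norm_nonneg _)
          exact hlt2
        calc dist w₁ a = ‖w₁ - a‖ := dist_eq_norm _ _
          _ < ‖w₀ - a‖ := this
          _ = dist w₀ a := (dist_eq_norm _ _).symm
          _ = μ * r a := hact
      · have hlt : dist w₀ a < μ * r a := lt_of_le_of_ne (hJle a ha) hact
        have htg : t < (μ * r a - dist w₀ a) / ‖u‖ := by
          have := htlt a ha
          simpa only [hg_def, if_neg hact] using this
        have h3 : t * ‖u‖ < μ * r a - dist w₀ a := by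
          rwa [lt_div_iff₀ hunorm] at htg
        calc dist w₁ a ≤ dist w₁ w₀ + dist w₀ a := dist_triangle _ _ _
          _ = t * ‖u‖ + dist w₀ a := by
              rw [hw₁_def, dist_eq_norm]
              simp [norm_smul, abs_of_pos htpos]
          _ < μ * r a := by linarith
    have hfw₁ : f w₁ < μ := by
      rw [hf_def, Finset.sup'_lt_iff]
      intro a ha
      rw [div_lt_iff₀ (hrpos a ha)]
      exact hstrict a ha
    exact absurd (hμ_global w₁) (not_le.mpr hfw₁)
  -- final contradiction via the quadratic inequality
  rw [Finset.convexHull_eq] at hw₀H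
  obtain ⟨c, hc0, hc1, hcm⟩ := hw₀H
  rw [Finset.centerMass_eq_of_sum_1 _ _ hc1] at hcm
  set P : Euc d → Euc d := fun p => p - w₀ with hP_def
  set Q : Euc d → Euc d' := fun p => φ p - y with hQ_def
  have hP0 : ∑ p ∈ J, c p • P p = 0 := by
    simp only [hP_def, smul_sub]
    rw [Finset.sum_sub_distrib, ← Finset.sum_smul, hc1, one_smul]
    simp only [id] at hcm
    rw [hcm, sub_self]
  have hPnorm : ∀ p ∈ J, ‖P p‖ = μ * r p := by
    intro p hp
    have hact := (Finset.mem_filter.mp hp).2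
    calc ‖P p‖ = ‖p - w₀‖ := by rw [hP_def]
      _ = dist w₀ p := by rw [dist_eq_norm, norm_sub_rev]
      _ = μ * r p := hact
  have hQnorm : ∀ p : Euc d, ‖Q p‖ = r p := by
    intro p
    simp only [hQ_def, hr_def]
    rw [dist_eq_norm]
  set A : ℝ := ∑ p ∈ J, c p * (r p)^2 with hA_def
  have hApos : 0 < A := by
    obtain ⟨p, hp, hcp⟩ : ∃ p ∈ J, 0 < c p := by
      by_contra h
      push_neg at h
      have : ∑ p ∈ J, c p ≤ 0 := Finset.sum_nonpos h
      rw [hc1] at this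
      linarith
    have h1 : 0 < c p * (r p)^2 := by
      have := hrpos p (hJsub hp)
      positivity
    have h2 : c p * (r p)^2 ≤ A :=
      Finset.single_le_sum (f := fun q => c q * (r q)^2)
        (fun q hq => by have := hrpos q (hJsub hq); have := hc0 q hq; positivity) hp
    linarith
  have hidP := sum_sq_identity J c P
  rw [hc1, hP0, norm_zero] at hidP
  have hsumP : ∑ p ∈ J, c p * ‖P p‖^2 = μ^2 * A := by
    rw [hA_def, Finset.mul_sum]
    exact Finset.sum_congr rfl fun p hp => by rw [hPnorm p hp]; ring
  have hidQ := sum_sq_identity J c Q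
  rw [hc1] at hidQ
  have hsumQ : ∑ p ∈ J, c p * ‖Q p‖^2 = A :=
    Finset.sum_congr rfl fun p _ => by rw [hQnorm p]
  have hle : ∑ p ∈ J, ∑ q ∈ J, c p * c q * ‖P p - P q‖^2
      ≤ ∑ p ∈ J, ∑ q ∈ J, c p * c q * ‖Q p - Q q‖^2 := by
    refine Finset.sum_le_sum fun p hp => Finset.sum_le_sum fun q hq => ?_
    have hnle : ‖P p - P q‖ ≤ ‖Q p - Q q‖ := by
      have h1 : P p - P q = p - q := by rw [hP_def]; exact sub_sub_sub_cancel_right _ _ _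
      have h2 : Q p - Q q = φ p - φ q := by rw [hQ_def]; exact sub_sub_sub_cancel_right _ _ _
      rw [h1, h2, ← dist_eq_norm, ← dist_eq_norm]
      exact hexp p (hJsub hp) q (hJsub hq)
    have := mul_le_mul_of_nonneg_left
      (pow_le_pow_left₀ (norm_nonneg _) hnle 2)
      (mul_nonneg (hc0 p hp) (hc0 q hq))
    exact this
  rw [hidP, hidQ, hsumP, hsumQ] at hle
  have hnQ : 0 ≤ ‖∑ p ∈ J, c p • Q p‖^2 := by positivity
  have hkey : 0 < (μ - 1) * ((μ + 1) * A) :=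
    mul_pos (by linarith) (mul_pos (by linarith) hApos)
  nlinarith [hkey]

lemma kirszbraun_set {d d' : ℕ} (S : Set (Euc d)) (hS : S.Nonempty)
    (φ : Euc d → Euc d') (y : Euc d')
    (hexp : ∀ a ∈ S, ∀ b ∈ S, dist a b ≤ dist (φ a) (φ b)) :
    ∃ w : Euc d, ∀ a ∈ S, dist w a ≤ dist (φ a) y := by
  obtain ⟨a₀, ha₀⟩ := hS
  set K := Metric.closedBall a₀ (dist (φ a₀) y) with hK_def
  have hKc : IsCompact K := isCompact_closedBall _ _
  by_contra hno
  push_neg at hno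
  have hempty : (K ∩ ⋂ a : S, Metric.closedBall (a : Euc d) (dist (φ a) y)) = ∅ := by
    ext w
    simp only [Set.mem_inter_iff, Set.mem_iInter, Set.mem_empty_iff_false, iff_false, not_and]
    intro hwK hw
    obtain ⟨a, ha, hlt⟩ := hno w
    exact absurd (by simpa using hw ⟨a, ha⟩) (not_le.mpr hlt)
  obtain ⟨u, hu⟩ := hKc.elim_finite_subfamily_closed _
    (fun a : S => Metric.isClosed_closedBall) hempty
  set T : Finset (Euc d) := insert a₀ (u.image (fun a : S => (a : Euc d))) with hT_def
  have hTsub : ∀ a ∈ T, a ∈ S := by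
    intro a ha
    rw [hT_def, Finset.mem_insert] at ha
    rcases ha with rfl | ha
    · exact ha₀
    · obtain ⟨b, _, rfl⟩ := Finset.mem_image.mp ha
      exact b.2
  obtain ⟨w, hw⟩ := kirszbraun_finset T φ y
    (fun a ha b hb => hexp a (hTsub a ha) b (hTsub b hb))
  have hwmem : w ∈ K ∩ ⋂ a ∈ u, Metric.closedBall (a : Euc d) (dist (φ a) y) := by
    constructor
    · rw [hK_def, Metric.mem_closedBall]
      exact hw a₀ (Finset.mem_insert_self _ _)
    · refine Set.mem_iInter₂.mpr fun a ha => ?_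
      rw [Metric.mem_closedBall]
      exact hw a (Finset.mem_insert_of_mem (Finset.mem_image_of_mem _ ha))
  rw [hu] at hwmem
  exact hwmem

lemma cov_lipschitz {d d' : ℕ} {C : Set (Euc d)} {C' : Set (Euc d')}
    (hb' : IsBounded C') (ψ : Euc d → Euc d')
    (hmap : ∀ x ∈ C, ψ x ∈ C')
    (hexp : ∀ x ∈ C, ∀ y ∈ C, dist x y ≤ dist (ψ x) (ψ y)) :
    cov d C ≤ cov d' C' := by
  obtain ⟨X, hXc, hX⟩ := cov_spec hb'
  have hch : ∀ x' : Euc d', ∃ w : Euc d,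
      ∀ a ∈ {c ∈ C | ψ c ∈ Metric.ball x' 1}, dist w a ≤ dist (ψ a) x' := by
    intro x'
    by_cases hne : ({c ∈ C | ψ c ∈ Metric.ball x' 1} : Set (Euc d)).Nonempty
    · exact kirszbraun_set _ hne ψ x' (fun a ha b hb => hexp a ha.1 b hb.1)
    · exact ⟨0, fun a ha => absurd ⟨a, ha⟩ hne⟩
  choose g hg using hch
  refine le_trans (cov_le (X.image g) ?_) (le_of_le_of_eq Finset.card_image_le hXc)
  intro p hp
  obtain ⟨x', hx'⟩ := Set.mem_iUnion.mp (hX (hmap p hp))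
  simp only [Set.mem_iUnion, exists_prop] at hx'
  have hpS : p ∈ {c ∈ C | ψ c ∈ Metric.ball x' 1} := ⟨hp, hx'.2⟩
  have hle := hg x' p hpS
  refine Set.mem_iUnion.mpr ⟨g x', Set.mem_iUnion.mpr
    ⟨Finset.mem_image_of_mem _ hx'.1, ?_⟩⟩
  rw [Metric.mem_ball, dist_comm]
  exact lt_of_le_of_lt hle (Metric.mem_ball.mp hx'.2)

/-- `cov` is a packing bound function: it satisfies the sphere bound,
Lipschitz, union, and mesh axioms. -/
theorem cov_isPackingBoundFunction :
    ∃ A : PackingBoundFunction,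
      A.toFun = fun d (C : Set (EuclideanSpace ℝ (Fin d))) => (cov d C : ℝ) := by
  refine ⟨⟨fun d C => (cov d C : ℝ), ?_, ?_, ?_, ?_, ?_⟩, rfl⟩
  · intro d C _ _
    positivity
  · intro d C _ _ hne hz
    exact_mod_cast cov_sphere hne hz
  · rintro d d' C C' hb _ hb' _ ⟨ψ, hmap, hexp⟩
    exact_mod_cast cov_lipschitz hb' ψ hmap hexp
  · intro d C C' hb _ hb' _ hsep
    exact_mod_cast cov_union hb hb' hsep
  · intro ε hε d C C' hb _ hb' _ hsub
    exact_mod_cast cov_mesh ε hε hb' hsub
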